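/- Advice lower bound for anti-string guessing (Theorem 14). Let q ≥ 2, n ≥ 1, and b be natural numbers and let 0 < α < 1/q. Let μ be a randomized algorithm reading b bits of advice for the n-round guessing game over Fin q (a PMF over pairs (φ, g) as below), whose cost on input x : Fin n → Fin q for a pair (φ,g) is the number of rounds i in which the answer y_i of (φ,g) equals x_i. If E_{(φ,g)∼μ}[cost on x] ≤ α·n for every input x, then b ≥ K_{1/q}(α)·n. -/

import Mathlib

open Finset

lemma sum_prod_adaptive {q : ℕ} :
    ∀ (n : ℕ) (f : (i : Fin n) → ({j : Fin n // j < i} → Fin q) → Fin q → ℝ) (s : ℝ),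
    (∀ i h, ∑ c, f i h c = s) →
    ∑ x : Fin n → Fin q, ∏ i, f i (fun j => x j.1) (x i) = s ^ n := by
  intro n
  induction n with
  | zero => intro f s hf; simp
  | succ n ih =>
    intro f s hf
    rw [← (Fin.snocEquiv (fun _ => Fin q)).sum_comp
      (fun x => ∏ i, f i (fun j => x j.1) (x i))]
    have key : ∀ (p : Fin q × (Fin n → Fin q)),
        (∏ i, f i (fun j => (Fin.snocEquiv (fun _ => Fin q) p) j.1)
          ((Fin.snocEquiv (fun _ => Fin q) p) i))
        = (∏ i : Fin n, f i.castSucc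
            (fun j => p.2 (j.1.castLT (lt_trans j.2 i.isLt)))
            (p.2 i)) * f (Fin.last n) (fun j => p.2 (j.1.castLT j.2)) p.1 := by
      intro p
      rw [Fin.prod_univ_castSucc]
      congr 1
      · apply Finset.prod_congr rfl
        intro i _
        have h1 : (Fin.snocEquiv (fun _ => Fin q) p) i.castSucc = p.2 i := by
          simp [Fin.snocEquiv]
        rw [h1]
        congr 1
        funext j
        have hj : (j.1 : ℕ) < n := lt_trans j.2 i.isLt
        have : j.1 = (j.1.castLT hj).castSucc := (Fin.castSucc_castLT _ _).symm
        show Fin.snoc (α := fun _ => Fin q) p.2 p.1 j.1 = _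
        conv_lhs => rw [this]
        rw [Fin.snoc_castSucc]
      · have h1 : (Fin.snocEquiv (fun _ => Fin q) p) (Fin.last n) = p.1 := by
          simp [Fin.snocEquiv]
        rw [h1]
        congr 1
        funext j
        have hj : (j.1 : ℕ) < n := j.2
        have : j.1 = (j.1.castLT hj).castSucc := (Fin.castSucc_castLT _ _).symm
        show Fin.snoc (α := fun _ => Fin q) p.2 p.1 j.1 = _
        conv_lhs => rw [this]
        rw [Fin.snoc_castSucc]
    simp_rw [key]
    rw [Fintype.sum_prod_type_right]
    simp_rw [← Finset.mul_sum, hf]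
    rw [← Finset.sum_mul]
    rw [ih (fun i h c => f i.castSucc (fun j => h ⟨j.1.castLT (lt_trans j.2 i.isLt), j.2⟩) c) s
      (fun i h => hf _ _)]
    ring

lemma adaptive_cost_sum {q : ℕ} (n : ℕ) (t : ℝ)
    (g : (i : Fin n) → ({j : Fin n // j < i} → Fin q) → Fin q) :
    ∑ x : Fin n → Fin q,
        t ^ (Finset.univ.filter (fun i => g i (fun j => x j.1) = x i)).card
      = (t + ((q : ℝ) - 1)) ^ n := by
  classical
  have h := sum_prod_adaptive n (fun i h c => if g i h = c then t else (1:ℝ))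
      (t + ((q : ℝ) - 1)) ?_
  · rw [← h]
    apply Finset.sum_congr rfl
    intro x _
    rw [Finset.prod_ite, Finset.prod_const, Finset.prod_const_one, mul_one]
  · intro i h
    have he : ∀ c : Fin q, (if g i h = c then t else (1:ℝ))
        = (if g i h = c then t - 1 else 0) + 1 := by
      intro c; split <;> ring
    simp_rw [he]
    rw [Finset.sum_add_distrib, Finset.sum_ite_eq, if_pos (Finset.mem_univ _),
      Finset.sum_const, Finset.card_univ, Fintype.card_fin]
    push_cast
    ring



open Classical

/-- The binary-divergence-type function `K_y(x) = x log₂(x/y) + (1-x) log₂((1-x)/(1-y))`. -/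
noncomputable def Kfun (y x : ℝ) : ℝ :=
  x * Real.logb 2 (x / y) + (1 - x) * Real.logb 2 ((1 - x) / (1 - y))

/-- A deterministic algorithm reading `b` bits of advice for an `n`-round guessing game
with known history over the alphabet `Fin q`. -/
abbrev AdviceAlg (n q b : ℕ) : Type :=
  ((Fin n → Fin q) → Fin (2 ^ b)) ×
    (Fin (2 ^ b) → (i : Fin n) → ({j : Fin n // j < i} → Fin q) → Fin q)

/-- Advice lower bound for anti-string guessing (Theorem 14):
a randomized algorithm reading `b` bits of advice whose expected number of rounds in
which its answer *equals* the input character is at most `α·n` on every input satisfies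
`b ≥ K_{1/q}(α)·n`. -/
theorem anti_string_guessing_lower_bound
    {q n b : ℕ} (hq : 2 ≤ q) (hn : 1 ≤ n)
    (α : ℝ) (hα0 : 0 < α) (hα1 : α < 1 / (q : ℝ))
    (μ : AdviceAlg n q b → ℝ) (hμ0 : ∀ a, 0 ≤ μ a) (hμ1 : ∑ a, μ a = 1)
    (hperf : ∀ x : Fin n → Fin q,
      (∑ alg, μ alg *
          ((Finset.univ.filter
            (fun i : Fin n => alg.2 (alg.1 x) i (fun j => x j.1) = x i)).card : ℝ))
        ≤ α * n) :
    (b : ℝ) ≥ Kfun (1 / (q : ℝ)) α * n := by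
  classical
  have hq2 : (2:ℝ) ≤ (q:ℝ) := by exact_mod_cast hq
  have hq0 : (0:ℝ) < (q:ℝ) := by linarith
  have hq1 : (1:ℝ) < (q:ℝ) := by linarith
  have hqm1 : (0:ℝ) < (q:ℝ) - 1 := by linarith
  have hq1d : 1/(q:ℝ) ≤ 1 := by rw [div_le_one hq0]; linarith
  have hα1' : α < 1 := lt_of_lt_of_le hα1 hq1d
  have h1α : (0:ℝ) < 1 - α := by linarith
  set t : ℝ := α * ((q:ℝ) - 1) / (1 - α) with ht_def
  have ht0 : 0 < t := by positivity
  have ht1 : t < 1 := by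
    rw [div_lt_one h1α]
    have : α * (q:ℝ) < 1 := (lt_div_iff₀ hq0).1 hα1
    nlinarith
  have hlt : Real.log t < 0 := Real.log_neg ht0 ht1
  -- Step A: per-algorithm bound
  have hSA : ∀ alg : AdviceAlg n q b,
      ∑ x : Fin n → Fin q,
        t ^ (Finset.univ.filter
          (fun i : Fin n => alg.2 (alg.1 x) i (fun j => x j.1) = x i)).card
      ≤ (2:ℝ)^b * (t + ((q:ℝ) - 1))^n := by
    intro alg
    calc ∑ x : Fin n → Fin q,
          t ^ (Finset.univ.filter
            (fun i : Fin n => alg.2 (alg.1 x) i (fun j => x j.1) = x i)).card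
        ≤ ∑ x : Fin n → Fin q, ∑ a : Fin (2^b),
          t ^ (Finset.univ.filter
            (fun i : Fin n => alg.2 a i (fun j => x j.1) = x i)).card := by
          apply Finset.sum_le_sum
          intro x _
          exact Finset.single_le_sum
            (f := fun a : Fin (2^b) => t ^ (Finset.univ.filter
              (fun i : Fin n => alg.2 a i (fun j => x j.1) = x i)).card)
            (fun a _ => pow_nonneg ht0.le _) (Finset.mem_univ (alg.1 x))
      _ = ∑ a : Fin (2^b), ∑ x : Fin n → Fin q,
          t ^ (Finset.univ.filter
            (fun i : Fin n => alg.2 a i (fun j => x j.1) = x i)).card :=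
          Finset.sum_comm
      _ = ∑ _a : Fin (2^b), (t + ((q:ℝ) - 1))^n := by
          apply Finset.sum_congr rfl
          intro a _
          exact adaptive_cost_sum n t (alg.2 a)
      _ = (2:ℝ)^b * (t + ((q:ℝ) - 1))^n := by
          rw [Finset.sum_const, Finset.card_univ, Fintype.card_fin, nsmul_eq_mul]
          push_cast
          ring
  -- Jensen step
  have hqn0 : (0:ℝ) < (q:ℝ)^n := by positivity
  set f : ℝ → ℝ := fun u => Real.exp (Real.log t * u) with hf_def
  have hconv : ConvexOn ℝ Set.univ f := by
    have h := convexOn_exp.comp_affineMap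
      ((Real.log t • (LinearMap.id : ℝ →ₗ[ℝ] ℝ)).toAffineMap)
    have h2 : ConvexOn ℝ Set.univ (Real.exp ∘ (Real.log t • id)) := by simpa using h
    exact h2
  set w : AdviceAlg n q b × (Fin n → Fin q) → ℝ := fun a => μ a.1 / (q:ℝ)^n with hw_def
  set z : AdviceAlg n q b × (Fin n → Fin q) → ℝ := fun a =>
    ((Finset.univ.filter
      (fun i : Fin n => a.1.2 (a.1.1 a.2) i (fun j => a.2 j.1) = a.2 i)).card : ℝ)
    with hz_def
  have hcardfun : (Fintype.card (Fin n → Fin q) : ℝ) = (q:ℝ)^n := by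
    simp [Fintype.card_fun]
  have hw1 : ∑ a, w a = 1 := by
    rw [Fintype.sum_prod_type]
    simp only [hw_def, Finset.sum_const, Finset.card_univ, nsmul_eq_mul]
    rw [hcardfun]
    have he : ∀ x : AdviceAlg n q b, (q:ℝ)^n * (μ x / (q:ℝ)^n) = μ x := by
      intro x; field_simp
    simp_rw [he]
    exact hμ1
  have hwz : ∑ a, w a • z a ≤ α * n := by
    have h1 : ∀ x : Fin n → Fin q,
        ∑ alg : AdviceAlg n q b, w (alg, x) • z (alg, x) ≤ (α * n) / (q:ℝ)^n := by
      intro x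
      have h2 : ∑ alg : AdviceAlg n q b, w (alg, x) • z (alg, x)
          = (∑ alg : AdviceAlg n q b, μ alg *
            ((Finset.univ.filter
              (fun i : Fin n => alg.2 (alg.1 x) i (fun j => x j.1) = x i)).card : ℝ))
            / (q:ℝ)^n := by
        rw [Finset.sum_div]
        apply Finset.sum_congr rfl
        intro alg _
        simp only [hw_def, hz_def, smul_eq_mul]
        ring
      rw [h2]
      gcongr
      exact hperf x
    calc ∑ a, w a • z a
        = ∑ x : Fin n → Fin q, ∑ alg : AdviceAlg n q b, w (alg, x) • z (alg, x) := by
          rw [Fintype.sum_prod_type_right]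
      _ ≤ ∑ _x : Fin n → Fin q, (α * n) / (q:ℝ)^n :=
          Finset.sum_le_sum (fun x _ => h1 x)
      _ = α * n := by
          rw [Finset.sum_const, Finset.card_univ, nsmul_eq_mul, hcardfun,
            mul_div_cancel₀ _ (ne_of_gt hqn0)]
  have hjensen := hconv.map_sum_le (w := w) (p := z)
    (fun i _ => div_nonneg (hμ0 i.1) hqn0.le) hw1 (fun i _ => Set.mem_univ _)
  have hmono : Real.exp (Real.log t * (α * n)) ≤ f (∑ a, w a • z a) := by
    apply Real.exp_le_exp.2
    exact mul_le_mul_of_nonpos_left hwz hlt.le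
  have hfz : ∀ a, f (z a) = t ^ (Finset.univ.filter
      (fun i : Fin n => a.1.2 (a.1.1 a.2) i (fun j => a.2 j.1) = a.2 i)).card := by
    intro a
    show Real.exp _ = _
    rw [mul_comm, Real.exp_nat_mul, Real.exp_log ht0]
  have hrhs : ∑ a, w a • f (z a) ≤ (2:ℝ)^b * (t + ((q:ℝ) - 1))^n / (q:ℝ)^n := by
    have he : ∑ a, w a • f (z a)
        = ∑ alg : AdviceAlg n q b, (μ alg / (q:ℝ)^n) *
            ∑ x : Fin n → Fin q,
              t ^ (Finset.univ.filter
                (fun i : Fin n => alg.2 (alg.1 x) i (fun j => x j.1) = x i)).card := by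
      rw [Fintype.sum_prod_type]
      apply Finset.sum_congr rfl
      intro alg _
      rw [Finset.mul_sum]
      apply Finset.sum_congr rfl
      intro x _
      rw [hfz]
      simp only [hw_def, smul_eq_mul]
    rw [he]
    calc ∑ alg : AdviceAlg n q b, (μ alg / (q:ℝ)^n) *
            ∑ x : Fin n → Fin q,
              t ^ (Finset.univ.filter
                (fun i : Fin n => alg.2 (alg.1 x) i (fun j => x j.1) = x i)).card
        ≤ ∑ alg : AdviceAlg n q b, (μ alg / (q:ℝ)^n) * ((2:ℝ)^b * (t + ((q:ℝ) - 1))^n) :=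
          Finset.sum_le_sum (fun alg _ =>
            mul_le_mul_of_nonneg_left (hSA alg) (div_nonneg (hμ0 _) hqn0.le))
      _ = (2:ℝ)^b * (t + ((q:ℝ) - 1))^n / (q:ℝ)^n := by
          rw [← Finset.sum_mul, ← Finset.sum_div, hμ1]
          ring
  have hkey : Real.exp (Real.log t * (α * n))
      ≤ (2:ℝ)^b * (t + ((q:ℝ) - 1))^n / (q:ℝ)^n :=
    le_trans hmono (le_trans hjensen hrhs)
  -- final log algebra
  have hA : t + ((q:ℝ) - 1) = ((q:ℝ) - 1) / (1 - α) := by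
    rw [ht_def]; field_simp; ring
  rw [hA] at hkey
  have hRpos : (0:ℝ) < (2:ℝ)^b * (((q:ℝ) - 1)/(1 - α))^n / (q:ℝ)^n := by positivity
  have hlog := (Real.le_log_iff_exp_le hRpos).2 hkey
  rw [Real.log_div (by positivity) (ne_of_gt hqn0),
    Real.log_mul (by positivity) (by positivity), Real.log_pow, Real.log_pow,
    Real.log_pow] at hlog
  have hlogt : Real.log t = Real.log α + Real.log ((q:ℝ) - 1) - Real.log (1 - α) := by
    rw [ht_def, Real.log_div (by positivity) (ne_of_gt h1α),
      Real.log_mul (ne_of_gt hα0) (ne_of_gt hqm1)]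
  have hlogA : Real.log (((q:ℝ) - 1)/(1 - α))
      = Real.log ((q:ℝ) - 1) - Real.log (1 - α) :=
    Real.log_div (ne_of_gt hqm1) (ne_of_gt h1α)
  have hlog2 : Real.log 2 ≠ 0 := ne_of_gt (Real.log_pos one_lt_two)
  have hKid : Kfun (1/(q:ℝ)) α * Real.log 2
      = α * Real.log t + Real.log (q:ℝ) - Real.log (((q:ℝ) - 1)/(1 - α)) := by
    unfold Kfun
    rw [Real.logb, Real.logb]
    have e1 : α / (1/(q:ℝ)) = α * (q:ℝ) := by field_simp
    have h1q0 : (0:ℝ) < 1 - 1/(q:ℝ) := by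
      have : 1/(q:ℝ) < 1 := by rw [div_lt_one hq0]; exact hq1
      linarith
    have e2 : (1 - α) / (1 - 1/(q:ℝ)) = (1 - α) * (q:ℝ) / ((q:ℝ) - 1) := by
      rw [div_eq_div_iff (ne_of_gt h1q0) (ne_of_gt hqm1)]
      field_simp
    rw [e1, e2, Real.log_mul (ne_of_gt hα0) (ne_of_gt hq0),
      Real.log_div (by positivity) (ne_of_gt hqm1),
      Real.log_mul (ne_of_gt h1α) (ne_of_gt hq0), hlogt, hlogA]
    field_simp
    ring
  have hfin : Kfun (1/(q:ℝ)) α * n * Real.log 2 ≤ (b:ℝ) * Real.log 2 := by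
    have h3 : Kfun (1/(q:ℝ)) α * n * Real.log 2
        = (α * Real.log t + Real.log (q:ℝ) - Real.log (((q:ℝ) - 1)/(1 - α))) * n := by
      rw [mul_right_comm, hKid]
    rw [h3]
    linarith only [hlog]
  exact le_of_mul_le_mul_right hfin (Real.log_pos one_lt_two)
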